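/- arXiv:2402.12209 — 2 statements merged into one kernel-verified Lean document; each statement's English description precedes it below -/
import Mathlib

section
/- Let n ≥ 2 and let Q ∈ SU_n have eigenvalues μ_1, …, μ_n counted with multiplicity, and set ζ(Q) := (1/(2π))·Σ_{j=1}^n arg(μ_j) ∈ ℤ. Then m(Q) = min{ Σ_{j=1}^n (arg(μ_j) + 2k_jπ)² : (k_1, …, k_n) ∈ ℤⁿ with Σ_{j=1}^n k_j = −ζ(Q) }. -/
noncomputable section

open scoped Real Matrix
open Matrix

/-- The special unitary group `SU_n` as a set of matrices: `Q Qᴴ = 1` and `det Q = 1`. -/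
def SpecialUnitary (n : ℕ) : Set (Matrix (Fin n) (Fin n) ℂ) :=
  {Q | Q * Qᴴ = 1 ∧ Q.det = 1}

/-- The Lie algebra `su_n`: skew-hermitian traceless matrices. -/
def suSet (n : ℕ) : Set (Matrix (Fin n) (Fin n) ℂ) :=
  {X | Xᴴ = -X ∧ Matrix.trace X = 0}

/-- The squared Frobenius norm `‖X‖_φ² = trace (X Xᴴ)` (a real number). -/
def frobSq {n : ℕ} (X : Matrix (Fin n) (Fin n) ℂ) : ℝ :=
  (Matrix.trace (X * Xᴴ)).re

/-- `m(Q) = inf { ‖X‖_φ² : X ∈ su_n, exp X = Q }`. -/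
def mQ {n : ℕ} (Q : Matrix (Fin n) (Fin n) ℂ) : ℝ :=
  sInf {r : ℝ | ∃ X ∈ suSet n, NormedSpace.exp X = Q ∧ frobSq X = r}

/-- `Θ(Q)`: the set of minimizing `su_n`-logarithms of `Q`. -/
def ThetaQ {n : ℕ} (Q : Matrix (Fin n) (Fin n) ℂ) : Set (Matrix (Fin n) (Fin n) ℂ) :=
  {X | X ∈ suSet n ∧ NormedSpace.exp X = Q ∧ frobSq X = mQ Q}

/-- `su_n`-plog(Q): generalized principal `su_n`-logarithms of `Q`, i.e. `su_n`-logarithms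
all of whose eigenvalues (roots of the characteristic polynomial) have imaginary part
in `[-π, π]`. -/
def plog {n : ℕ} (Q : Matrix (Fin n) (Fin n) ℂ) : Set (Matrix (Fin n) (Fin n) ℂ) :=
  {X | X ∈ suSet n ∧ NormedSpace.exp X = Q ∧
    ∀ lam ∈ X.charpoly.roots, -π ≤ lam.im ∧ lam.im ≤ π}


open scoped InnerProductSpace ComplexConjugate
open Module Polynomial

section AuxLemmas


lemma exists_comp_perm_eq {α : Type*} : ∀ {n : ℕ} {f g : Fin n → α},
    Multiset.map f Finset.univ.val = Multiset.map g Finset.univ.val →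
    ∃ σ : Equiv.Perm (Fin n), ∀ j, f (σ j) = g j := by
  intro n
  induction n with
  | zero => exact fun _ => ⟨1, fun j => j.elim0⟩
  | succ n ih =>
    intro f g h
    have h' : ((List.ofFn f : List α) : Multiset α) = (List.ofFn g : List α) := by
      simpa [Fin.univ_val_map] using h
    have hperm : List.Perm (List.ofFn f) (List.ofFn g) := Multiset.coe_eq_coe.mp h'
    have h0 : g 0 ∈ List.ofFn f := hperm.mem_iff.mpr (by
      rw [List.mem_ofFn]; exact ⟨0, rfl⟩)
    obtain ⟨i, hi⟩ := List.mem_ofFn.mp h0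
    set τ : Equiv.Perm (Fin (n+1)) := Equiv.swap 0 i with hτ
    have hperm2 : List.Perm (List.ofFn (f ∘ τ)) (List.ofFn g) :=
      (Equiv.Perm.ofFn_comp_perm τ f).trans hperm
    rw [List.ofFn_succ, List.ofFn_succ] at hperm2
    have hfg0 : (f ∘ τ) 0 = g 0 := by simp [hτ, hi]
    rw [hfg0] at hperm2
    have htail : List.Perm (List.ofFn (fun j : Fin n => (f ∘ τ) j.succ))
        (List.ofFn (fun j : Fin n => g j.succ)) := hperm2.cons_inv
    have htail' : Multiset.map (fun j : Fin n => (f ∘ τ) j.succ) Finset.univ.val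
        = Multiset.map (fun j : Fin n => g j.succ) Finset.univ.val := by
      rw [Fin.univ_val_map, Fin.univ_val_map]
      exact Multiset.coe_eq_coe.mpr htail
    obtain ⟨σ', hσ'⟩ := ih htail'
    refine ⟨(Equiv.Perm.decomposeFin.symm (0, σ')).trans τ, ?_⟩
    intro j
    induction j using Fin.cases with
    | zero => simp [hτ, hi]
    | succ x =>
      have := hσ' x
      simpa [Equiv.Perm.decomposeFin_symm_apply_succ] using this


lemma exists_min_tuple (n : ℕ) (hn : 0 < n) (a : Fin n → ℝ) (ζ : ℤ) :
    ∃ k0 : Fin n → ℤ, (∑ j, k0 j) = -ζ ∧ ∀ k : Fin n → ℤ, (∑ j, k j) = -ζ →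
      (∑ j, (a j + 2 * (k0 j : ℝ) * π) ^ 2) ≤ ∑ j, (a j + 2 * (k j : ℝ) * π) ^ 2 := by
  classical
  set f : (Fin n → ℤ) → ℝ := fun k => ∑ j, (a j + 2 * (k j : ℝ) * π) ^ 2 with hf
  have hπ : (0:ℝ) < π := Real.pi_pos
  set j0 : Fin n := ⟨0, hn⟩
  set k1 : Fin n → ℤ := fun j => if j = j0 then -ζ else 0 with hk1
  have hk1sum : (∑ j, k1 j) = -ζ := by
    rw [hk1]; simp [Finset.sum_ite_eq']
  set C : ℝ := f k1 with hC
  set T : Set (Fin n → ℤ) := {k | (∑ j, k j) = -ζ ∧ f k ≤ C} with hT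
  have hk1T : k1 ∈ T := ⟨hk1sum, le_refl _⟩
  -- finiteness
  have hfin : T.Finite := by
    set M : Fin n → ℤ := fun j => ⌈(|a j| + Real.sqrt C) / (2 * π)⌉ with hM
    have hsub : T ⊆ Set.pi Set.univ (fun j => Set.Icc (-M j) (M j)) := by
      intro k hk j _
      have hterm : (a j + 2 * (k j : ℝ) * π) ^ 2 ≤ C :=
        le_trans (Finset.single_le_sum (f := fun j => (a j + 2 * (k j : ℝ) * π) ^ 2)
          (fun i _ => sq_nonneg _) (Finset.mem_univ j)) hk.2
      have habs : |a j + 2 * (k j : ℝ) * π| ≤ Real.sqrt C := by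
        rw [← Real.sqrt_sq_eq_abs]
        exact Real.sqrt_le_sqrt hterm
      have h2 : |2 * (k j : ℝ) * π| ≤ |a j| + Real.sqrt C := by
        have h := abs_add_le (a j + 2 * (k j : ℝ) * π) (-(a j))
        rw [abs_neg] at h
        have he : a j + 2 * (k j : ℝ) * π + -(a j) = 2 * (k j : ℝ) * π := by ring
        rw [he] at h
        linarith
      have h4 : |(k j : ℝ)| ≤ (|a j| + Real.sqrt C) / (2 * π) := by
        rw [le_div_iff₀ (by positivity)]
        calc |(k j : ℝ)| * (2 * π) = |2 * (k j : ℝ) * π| := by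
              rw [abs_mul, abs_mul, abs_of_pos hπ, abs_of_pos (by norm_num : (0:ℝ) < 2)]; ring
          _ ≤ _ := h2
      have h5 : |k j| ≤ M j := by
        have : ((|k j| : ℤ) : ℝ) ≤ (M j : ℝ) := by
          rw [Int.cast_abs]
          exact le_trans h4 (Int.le_ceil _)
        exact_mod_cast this
      exact Set.mem_Icc.mpr (abs_le.mp h5)
    exact Set.Finite.subset (Set.Finite.pi (fun j => Set.finite_Icc _ _)) hsub
  obtain ⟨k0, hk0T, hk0min⟩ := Set.exists_min_image T f hfin ⟨k1, hk1T⟩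
  refine ⟨k0, hk0T.1, ?_⟩
  intro k hk
  by_cases hle : f k ≤ C
  · exact hk0min k ⟨hk, hle⟩
  · exact le_trans (le_trans (hk0min k1 hk1T) (le_refl C)) (le_of_not_ge hle)

variable {n : ℕ}

lemma charpoly_unitary_conj {n : ℕ} (U A : Matrix (Fin n) (Fin n) ℂ) (hU : U * Uᴴ = 1) :
    (U * A * Uᴴ).charpoly = A.charpoly := by
  have key : charmatrix (U * A * Uᴴ) =
      U.map C * charmatrix A * (Uᴴ).map C := by
    unfold charmatrix
    rw [mul_sub, sub_mul]
    congr 1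
    · -- U.map C * scalar X * Uᴴ.map C = scalar X
      have hcomm : U.map C * Matrix.scalar (Fin n) (X : ℂ[X]) =
          Matrix.scalar (Fin n) (X : ℂ[X]) * U.map C :=
        (Matrix.scalar_commute (X : ℂ[X]) (fun r => Commute.all _ _) (U.map C)).symm
    
      rw [hcomm, mul_assoc]
      rw [← Matrix.map_mul, hU, Matrix.map_one C (map_zero C) (map_one C), mul_one]
    · simp only [RingHom.mapMatrix_apply]
      rw [← Matrix.map_mul, ← Matrix.map_mul]
  unfold Matrix.charpoly
  rw [key, Matrix.det_mul, Matrix.det_mul, mul_comm, ← mul_assoc, ← Matrix.det_mul,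
    ← Matrix.map_mul, mul_eq_one_comm.mp hU, Matrix.map_one C (map_zero C) (map_one C),
    Matrix.det_one, one_mul]

lemma charpoly_diagonal_roots {n : ℕ} (d : Fin n → ℂ) :
    (Matrix.diagonal d).charpoly.roots = Multiset.map d Finset.univ.val := by
  have h1 : (Matrix.diagonal d).charpoly = ∏ j, (X - C (d j)) := by
    unfold Matrix.charpoly
    have : charmatrix (Matrix.diagonal d) = Matrix.diagonal (fun j => X - C (d j)) := by
      ext i j
      by_cases h : i = j
      · subst h; simp
      · simp [charmatrix_apply_ne _ _ _ h, Matrix.diagonal_apply_ne _ h]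
    rw [this, Matrix.det_diagonal]
  rw [h1]
  have h2 : (∏ j, (X - C (d j))) =
      (Multiset.map (fun a : ℂ => X - C a) (Multiset.map d Finset.univ.val)).prod := by
    rw [Multiset.map_map, Finset.prod_eq_multiset_prod]
    rfl
  rw [h2, Polynomial.roots_multiset_prod_X_sub_C]

lemma roots_of_unitary_conj_diagonal {n : ℕ} {Q U : Matrix (Fin n) (Fin n) ℂ} {d : Fin n → ℂ}
    (hU : U * Uᴴ = 1) (h : Q = U * Matrix.diagonal d * Uᴴ) :
    Q.charpoly.roots = Multiset.map d Finset.univ.val := by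
  rw [h, charpoly_unitary_conj U _ hU, charpoly_diagonal_roots]


lemma frobSq_nonneg (X : Matrix (Fin n) (Fin n) ℂ) : 0 ≤ frobSq X := by
  unfold frobSq
  rw [Matrix.trace]
  simp only [Matrix.diag_apply, Matrix.mul_apply, Matrix.conjTranspose_apply,
    Complex.re_sum]
  apply Finset.sum_nonneg; intro i _
  apply Finset.sum_nonneg; intro j _
  rw [Complex.star_def, Complex.mul_conj]
  simp [Complex.normSq_nonneg]

section conjdiag

variable (W : Matrix (Fin n) (Fin n) ℂ) (v : Fin n → ℝ)

def cd : Matrix (Fin n) (Fin n) ℂ := W * Matrix.diagonal (fun j => (v j : ℂ) * Complex.I) * Wᴴ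

lemma cd_conjTranspose : (cd W v)ᴴ = -(cd W v) := by
  unfold cd
  have h2 : Matrix.diagonal (star fun j => (v j : ℂ) * Complex.I) =
      -Matrix.diagonal (fun j => (v j : ℂ) * Complex.I) := by
    ext i k
    by_cases h : i = k
    · subst h; simp [Complex.ext_iff]
    · simp [Matrix.diagonal_apply_ne _ h]
  simp only [Matrix.conjTranspose_mul, Matrix.conjTranspose_conjTranspose,
    Matrix.diagonal_conjTranspose, h2, Matrix.mul_neg, Matrix.neg_mul, mul_assoc]

lemma cd_trace (hW : W * Wᴴ = 1) : Matrix.trace (cd W v) = (∑ j, (v j : ℂ)) * Complex.I := by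
  unfold cd
  rw [Matrix.trace_mul_cycle, mul_eq_one_comm.mp hW, one_mul,
    Matrix.trace_diagonal, Finset.sum_mul]

lemma cd_exp (hW : W * Wᴴ = 1) :
    NormedSpace.exp (cd W v) =
      W * Matrix.diagonal (fun j => Complex.exp ((v j : ℂ) * Complex.I)) * Wᴴ := by
  unfold cd
  have hu : IsUnit W := by
    have : IsUnit W.det := by
      have := congrArg Matrix.det hW
      rw [Matrix.det_mul, Matrix.det_one] at this
      exact IsUnit.of_mul_eq_one _ this
    exact (Matrix.isUnit_iff_isUnit_det W).mpr this
  have hinv : W⁻¹ = Wᴴ := Matrix.inv_eq_right_inv hW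
  rw [← hinv, Matrix.exp_conj W _ hu, Matrix.exp_diagonal]
  rw [Pi.exp_def]
  congr 2
  funext j
  rw [← Complex.exp_eq_exp_ℂ]

lemma cd_frobSq (hW : W * Wᴴ = 1) : frobSq (cd W v) = ∑ j, (v j) ^ 2 := by
  have hW' : Wᴴ * W = 1 := mul_eq_one_comm.mp hW
  unfold frobSq
  have h1 : cd W v * (cd W v)ᴴ =
      W * (Matrix.diagonal (fun j => ((v j : ℂ) * Complex.I) *
        star ((v j : ℂ) * Complex.I))) * Wᴴ := by
    simp only [cd, Matrix.conjTranspose_mul, Matrix.conjTranspose_conjTranspose,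
      Matrix.diagonal_conjTranspose, mul_assoc]
    rw [← mul_assoc Wᴴ W, hW', one_mul, ← mul_assoc (Matrix.diagonal _) (Matrix.diagonal _),
      Matrix.diagonal_mul_diagonal]
    simp only [Pi.star_apply, mul_assoc]
  rw [h1, Matrix.trace_mul_cycle, hW', one_mul, Matrix.trace_diagonal]
  have : ∀ j, ((v j : ℂ) * Complex.I) * star ((v j : ℂ) * Complex.I) = ((v j ^ 2 : ℝ) : ℂ) := by
    intro j
    rw [Complex.star_def, _root_.map_mul, Complex.conj_I, Complex.conj_ofReal]
    push_cast
    ring_nf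
    rw [Complex.I_sq]
    ring
  simp only [this]
  rw [← Complex.ofReal_sum]
  exact Complex.ofReal_re _

end conjdiag


lemma isometry_diagonalizable : ∀ (m : ℕ) (E : Type) (_ : NormedAddCommGroup E)
    (_ : InnerProductSpace ℂ E) (_ : FiniteDimensional ℂ E), finrank ℂ E = m →
    ∀ T : E →ₗ[ℂ] E, (∀ x y : E, ⟪T x, T y⟫_ℂ = ⟪x, y⟫_ℂ) →
    ∃ (b : OrthonormalBasis (Fin m) ℂ E) (d : Fin m → ℂ), ∀ j, T (b j) = d j • b j := by
  intro m
  induction m with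
  | zero =>
    intro E _ _ _ hrank T _
    exact ⟨(stdOrthonormalBasis ℂ E).reindex (finCongr hrank), 0, fun j => j.elim0⟩
  | succ m ih =>
    intro E _ _ _ hrank T hT
    haveI : Nontrivial E := by
      apply Module.nontrivial_of_finrank_pos (R := ℂ)
      omega
    obtain ⟨c, hc⟩ := Module.End.exists_eigenvalue T
    obtain ⟨v, hv⟩ := hc.exists_hasEigenvector
    have hv0 : v ≠ 0 := hv.right
    set u : E := (‖v‖ : ℂ)⁻¹ • v with hu_def
    have hu0 : u ≠ 0 := by
      simp only [hu_def, ne_eq, smul_eq_zero, inv_eq_zero, Complex.ofReal_eq_zero,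
        norm_eq_zero]
      push_neg
      exact ⟨hv0, hv0⟩
    have hu_norm : ‖u‖ = 1 := by
      rw [hu_def, norm_smul]
      simp [norm_ne_zero_iff.mpr hv0]
    have hTu : T u = c • u := by
      rw [hu_def, LinearMap.map_smul, hv.apply_eq_smul, smul_comm]
    have huu : ⟪u, u⟫_ℂ = 1 := by
      rw [inner_self_eq_norm_sq_to_K, hu_norm]
      norm_num
    have hc0 : c ≠ 0 := by
      intro h
      apply hu0
      rw [← inner_self_eq_zero (𝕜 := ℂ), ← hT u u, hTu, h, zero_smul, inner_zero_left]
    set K : Submodule ℂ E := (ℂ ∙ u)ᗮ with hK_def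
    have hK : ∀ x ∈ K, T x ∈ K := by
      intro x hx
      rw [hK_def, Submodule.mem_orthogonal] at hx ⊢
      intro z hz
      obtain ⟨a, rfl⟩ := Submodule.mem_span_singleton.mp hz
      have h1 : ⟪T u, T x⟫_ℂ = 0 := by
        rw [hT u x]
        exact hx u (Submodule.mem_span_singleton_self u)
      rw [hTu, inner_smul_left] at h1
      have h2 : ⟪u, T x⟫_ℂ = 0 := by
        rcases mul_eq_zero.mp h1 with h | h
        · exact absurd h (by simpa using hc0)
        · exact h
      rw [inner_smul_left, h2, mul_zero]
    have hrankK : finrank ℂ K = m := by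
      have h1 : finrank ℂ (ℂ ∙ u) = 1 := finrank_span_singleton hu0
      have h2 := Submodule.finrank_add_finrank_orthogonal (K := (ℂ ∙ u : Submodule ℂ E))
      rw [h1, hrank] at h2
      rw [hK_def]
      omega
    set T' := T.restrict hK with hT'_def
    have hT' : ∀ x y : K, ⟪T' x, T' y⟫_ℂ = ⟪x, y⟫_ℂ := by
      intro x y
      have := hT (x : E) (y : E)
      simpa [hT'_def, Submodule.coe_inner, LinearMap.restrict_coe_apply] using this
    obtain ⟨b', d', hb'⟩ := ih K inferInstance inferInstance inferInstance hrankK T' hT'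
    set f : Fin (m + 1) → E := Fin.cons u (fun i => (b' i : E)) with hf_def
    have hbK : ∀ i : Fin m, (b' i : E) ∈ K := fun i => (b' i).2
    have horto : ∀ i : Fin m, ⟪u, (b' i : E)⟫_ℂ = 0 := fun i =>
      (Submodule.mem_orthogonal (ℂ ∙ u) _).mp (hbK i) u (Submodule.mem_span_singleton_self u)
    have hf : Orthonormal ℂ f := by
      rw [orthonormal_iff_ite]
      intro i j
      induction i using Fin.cases with
      | zero =>
        induction j using Fin.cases with
        | zero => simpa [hf_def] using huu
        | succ x =>
          simp [hf_def, horto x, Ne.symm (Fin.succ_ne_zero x)]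
      | succ x =>
        induction j using Fin.cases with
        | zero =>
          have : ⟪(b' x : E), u⟫_ℂ = 0 := by
            rw [← inner_conj_symm, horto x, map_zero]
          simp [hf_def, this, Fin.succ_ne_zero]
        | succ y =>
          have := b'.orthonormal
          rw [orthonormal_iff_ite] at this
          have h := this x y
          rw [Submodule.coe_inner] at h
          simp only [hf_def, Fin.cons_succ]
          rw [h]
          by_cases hxy : x = y
          · subst hxy; simp
          · simp [hxy, fun h => hxy (Fin.succ_injective _ h)]
    have hcard : Fintype.card (Fin (m + 1)) = finrank ℂ E := by
      simp [hrank]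
    set bE : Basis (Fin (m + 1)) ℂ E :=
      basisOfLinearIndependentOfCardEqFinrank hf.linearIndependent hcard with hbE_def
    have hbE_coe : ⇑bE = f := by
      rw [hbE_def, coe_basisOfLinearIndependentOfCardEqFinrank]
    set b : OrthonormalBasis (Fin (m + 1)) ℂ E := bE.toOrthonormalBasis (by rwa [hbE_coe]) with hb_def
    have hb_coe : ∀ j, b j = f j := by
      intro j
      rw [hb_def, Basis.coe_toOrthonormalBasis, hbE_coe]
    refine ⟨b, Fin.cons c d', ?_⟩
    intro j
    induction j using Fin.cases with
    | zero =>
      rw [hb_coe]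
      simpa [hf_def] using hTu
    | succ x =>
      rw [hb_coe]
      simp only [hf_def, Fin.cons_succ]
      have h1 : T (b' x : E) = (T' (b' x) : E) := (LinearMap.restrict_coe_apply _ _ _).symm
      rw [h1, hb' x]
      simp

/-- Unitary diagonalization of a matrix satisfying `Q * Qᴴ = 1`. -/
lemma unitary_matrix_diagonalizable {n : ℕ} (Q : Matrix (Fin n) (Fin n) ℂ)
    (hQ : Q * Qᴴ = 1) :
    ∃ U : Matrix (Fin n) (Fin n) ℂ, U * Uᴴ = 1 ∧
      ∃ d : Fin n → ℂ, Q = U * Matrix.diagonal d * Uᴴ := by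
  have hQ' : Qᴴ * Q = 1 := mul_eq_one_comm.mp hQ
  set T := Matrix.toEuclideanLin Q with hT_def
  have hT : ∀ x y : EuclideanSpace ℂ (Fin n), ⟪T x, T y⟫_ℂ = ⟪x, y⟫_ℂ := by
    intro x y
    rw [hT_def]
    rw [EuclideanSpace.inner_eq_star_dotProduct, EuclideanSpace.inner_eq_star_dotProduct]
    simp only [Matrix.toEuclideanLin_apply, Equiv.apply_symm_apply]
    rw [Matrix.star_mulVec, dotProduct_comm (Q *ᵥ _), Matrix.dotProduct_mulVec, Matrix.vecMul_vecMul, hQ',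
      Matrix.vecMul_one, dotProduct_comm]
  have hrank : finrank ℂ (EuclideanSpace ℂ (Fin n)) = n := finrank_euclideanSpace_fin
  obtain ⟨b, d, hb⟩ := isometry_diagonalizable n (EuclideanSpace ℂ (Fin n)) inferInstance
    inferInstance inferInstance hrank T hT
  set U : Matrix (Fin n) (Fin n) ℂ :=
    (EuclideanSpace.basisFun (Fin n) ℂ).toBasis.toMatrix b.toBasis with hU_def
  have hU_mem : U ∈ Matrix.unitaryGroup (Fin n) ℂ :=
    (EuclideanSpace.basisFun (Fin n) ℂ).toMatrix_orthonormalBasis_mem_unitary b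
  have hU : U * Uᴴ = 1 := by
    have := hU_mem.2
    rwa [Matrix.star_eq_conjTranspose] at this
  have hU_apply : ∀ i j, U i j = b j i := fun i j => rfl
  have hQb : ∀ j, Q *ᵥ ⇑(b j) = d j • ⇑(b j) := by
    intro j
    have := hb j
    rw [hT_def] at this
    have h2 := congrArg (⇑) this
    simpa [Matrix.toEuclideanLin_apply] using h2
  have hQU : Q * U = U * Matrix.diagonal d := by
    ext i j
    rw [Matrix.mul_apply, Matrix.mul_diagonal]
    have h1 : ∑ k, Q i k * U k j = (Q *ᵥ ⇑(b j)) i := by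
      rw [Matrix.mulVec]
      simp [dotProduct, hU_apply]
    rw [h1, hQb j]
    simp [hU_apply, mul_comm]
  refine ⟨U, hU, d, ?_⟩
  calc Q = Q * (U * Uᴴ) := by rw [hU, mul_one]
    _ = (Q * U) * Uᴴ := by rw [mul_assoc]
    _ = U * Matrix.diagonal d * Uᴴ := by rw [hQU]


end AuxLemmas

/-- `m(Q)` is the minimum of `Σ (arg μ_j + 2 k_j π)²` over integer
tuples `k` with `Σ k_j = −ζ(Q)`. -/
theorem stmt_4 (n : ℕ) (hn : 2 ≤ n) (Q : Matrix (Fin n) (Fin n) ℂ)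
    (hQ : Q ∈ SpecialUnitary n) (μ : Fin n → ℂ)
    (hμ : Q.charpoly.roots = Multiset.map μ Finset.univ.val)
    (ζ : ℤ) (hζ : (∑ j, (μ j).arg) = 2 * π * ζ) :
    IsLeast {r : ℝ | ∃ k : Fin n → ℤ, (∑ j, k j) = -ζ ∧
      r = ∑ j, ((μ j).arg + 2 * (k j : ℝ) * π) ^ 2} (mQ Q) := by
  classical
  have hπ : (0:ℝ) < π := Real.pi_pos
  -- Step 1: diagonalize Q
  obtain ⟨U, hU, d, hQd⟩ := unitary_matrix_diagonalizable Q hQ.1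
  have hU' : Uᴴ * U = 1 := mul_eq_one_comm.mp hU
  -- Step 2: permutation relating d and μ
  have hroots : Multiset.map d Finset.univ.val = Multiset.map μ Finset.univ.val := by
    rw [← roots_of_unitary_conj_diagonal hU hQd, hμ]
  obtain ⟨σ, hσ⟩ := exists_comp_perm_eq hroots
  -- Step 3: eigenvalues have modulus one
  have hdiag_eq : Matrix.diagonal d = Uᴴ * Q * U := by
    rw [hQd]
    calc Matrix.diagonal d = (Uᴴ * U) * Matrix.diagonal d * (Uᴴ * U) := by
          rw [hU']; simp
      _ = Uᴴ * (U * Matrix.diagonal d * Uᴴ) * U := by simp only [mul_assoc]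
  have hmod : ∀ j, d j * star (d j) = 1 := by
    intro j
    have h1 : Matrix.diagonal d * (Matrix.diagonal d)ᴴ = 1 := by
      rw [hdiag_eq]
      have hct : (Uᴴ * Q * U)ᴴ = Uᴴ * Qᴴ * U := by
        simp only [Matrix.conjTranspose_mul, Matrix.conjTranspose_conjTranspose, mul_assoc]
      rw [hct]
      calc Uᴴ * Q * U * (Uᴴ * Qᴴ * U) = Uᴴ * (Q * (U * Uᴴ) * Qᴴ) * U := by
            simp only [mul_assoc]
        _ = 1 := by rw [hU, mul_one, hQ.1, mul_one, hU']
    rw [Matrix.diagonal_conjTranspose, Matrix.diagonal_mul_diagonal] at h1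
    have h2 := congrFun (congrFun h1 j) j
    simpa using h2
  have hexp : ∀ j, Complex.exp (((μ j).arg : ℂ) * Complex.I) = μ j := by
    intro j
    have habs : ‖μ j‖ = 1 := by
      have h3 : μ j * star (μ j) = 1 := by rw [← hσ j]; exact hmod (σ j)
      rw [Complex.star_def, Complex.mul_conj] at h3
      have h4 : Complex.normSq (μ j) = 1 := by exact_mod_cast h3
      rw [Complex.norm_def, h4, Real.sqrt_one]
    have h5 := Complex.norm_mul_exp_arg_mul_I (μ j)
    rw [habs] at h5
    simpa using h5
  -- The set of achieved values
  set V : Set ℝ := {r : ℝ | ∃ X ∈ suSet n, NormedSpace.exp X = Q ∧ frobSq X = r} with hV_def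
  have hbddV : BddBelow V := by
    refine ⟨0, ?_⟩
    rintro r ⟨X, _, _, rfl⟩
    exact frobSq_nonneg X
  -- Step 4: every admissible k-value is achieved
  have hach : ∀ k : Fin n → ℤ, (∑ j, k j) = -ζ →
      (∑ j, ((μ j).arg + 2 * (k j : ℝ) * π) ^ 2) ∈ V := by
    intro k hk
    set v : Fin n → ℝ := fun j => (μ (σ.symm j)).arg + 2 * (k (σ.symm j) : ℝ) * π with hv_def
    have hdv : ∀ j, Complex.exp ((v j : ℂ) * Complex.I) = d j := by
      intro j
      have h1 : ((v j : ℝ) : ℂ) * Complex.I =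
          ((μ (σ.symm j)).arg : ℂ) * Complex.I + (k (σ.symm j) : ℤ) * (2 * (π:ℂ) * Complex.I) := by
        rw [hv_def]; push_cast; ring
      rw [h1, Complex.exp_add, Complex.exp_int_mul_two_pi_mul_I, mul_one, hexp (σ.symm j),
        ← hσ (σ.symm j), Equiv.apply_symm_apply]
    have hsv : ∑ j, v j = 0 := by
      have h2 : ∑ j, v j = ∑ j, ((μ j).arg + 2 * (k j : ℝ) * π) :=
        Equiv.sum_comp σ.symm (fun i => (μ i).arg + 2 * (k i : ℝ) * π)
      have h3 : (∑ j, (k j : ℝ)) = ((-ζ : ℤ) : ℝ) := by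
        exact_mod_cast congrArg (fun z : ℤ => (z : ℝ)) hk
      have h4 : ∑ j, 2 * (k j : ℝ) * π = 2 * ((-ζ : ℤ) : ℝ) * π := by
        calc ∑ j, 2 * (k j : ℝ) * π = 2 * (∑ j, (k j : ℝ)) * π := by
              rw [Finset.mul_sum, Finset.sum_mul]
          _ = 2 * ((-ζ : ℤ) : ℝ) * π := by rw [h3]
      rw [h2, Finset.sum_add_distrib, hζ, h4]
      push_cast
      ring
    refine ⟨cd U v, ⟨cd_conjTranspose U v, ?_⟩, ?_, ?_⟩
    · rw [cd_trace U v hU, ← Complex.ofReal_sum, hsv]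
      simp
    · rw [cd_exp U v hU, show (fun j => Complex.exp ((v j : ℂ) * Complex.I)) = d from funext hdv]
      exact hQd.symm
    · rw [cd_frobSq U v hU]
      exact Equiv.sum_comp σ.symm (fun i => ((μ i).arg + 2 * (k i : ℝ) * π) ^ 2)
  -- Step 5: every achieved value is an admissible k-value
  have hV_sub : ∀ r ∈ V, ∃ k : Fin n → ℤ, (∑ j, k j) = -ζ ∧
      r = ∑ j, ((μ j).arg + 2 * (k j : ℝ) * π) ^ 2 := by
    rintro r ⟨X, hXsu, hXexp, hXfr⟩
    have hH : (Complex.I • X).IsHermitian := by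
      unfold Matrix.IsHermitian
      rw [Matrix.conjTranspose_smul, hXsu.1]
      simp [Complex.star_def, Complex.conj_I]
    set W : Matrix (Fin n) (Fin n) ℂ := (hH.eigenvectorUnitary : Matrix (Fin n) (Fin n) ℂ)
      with hW_def
    have hWu : W * Wᴴ = 1 := by
      have h := hH.eigenvectorUnitary.2
      rw [Matrix.mem_unitaryGroup_iff] at h
      rwa [Matrix.star_eq_conjTranspose] at h
    set lam : Fin n → ℝ := hH.eigenvalues with hlam_def
    set v : Fin n → ℝ := fun j => -(lam j) with hv_def
    have hXcd : cd W v = X := by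
      have hspec := hH.spectral_theorem
      rw [Unitary.conjStarAlgAut_apply, Matrix.star_eq_conjTranspose] at hspec
      rw [← hW_def, ← hlam_def] at hspec
      unfold cd
      have hfun : (fun j => ((v j : ℝ) : ℂ) * Complex.I) =
          (-Complex.I) • (RCLike.ofReal ∘ lam : Fin n → ℂ) := by
        funext j
        show ((v j : ℝ) : ℂ) * Complex.I = (-Complex.I) * ((lam j : ℝ) : ℂ)
        rw [hv_def]
        push_cast
        ring
      rw [hfun, Matrix.diagonal_smul]
      calc W * ((-Complex.I) • Matrix.diagonal (RCLike.ofReal ∘ lam)) * Wᴴ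
          = (-Complex.I) • (W * Matrix.diagonal (RCLike.ofReal ∘ lam) * Wᴴ) := by
            rw [Matrix.mul_smul, Matrix.smul_mul]
        _ = (-Complex.I) • (Complex.I • X) := by rw [← hspec]
        _ = X := by
            rw [smul_smul]
            norm_num [Complex.I_mul_I]
    have hsv : ∑ j, v j = 0 := by
      have h5 : ((∑ j, v j : ℝ) : ℂ) * Complex.I = 0 := by
        rw [Complex.ofReal_sum, ← cd_trace W v hWu, hXcd]
        exact hXsu.2
      rcases mul_eq_zero.mp h5 with h6 | h6
      · exact_mod_cast h6
      · exact absurd h6 Complex.I_ne_zero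
    have hQroots2 : Q.charpoly.roots =
        Multiset.map (fun j => Complex.exp ((v j : ℂ) * Complex.I)) Finset.univ.val := by
      refine roots_of_unitary_conj_diagonal hWu ?_
      rw [← hXexp, ← hXcd, cd_exp W v hWu]
    have hcomb : Multiset.map (fun j => Complex.exp ((v j : ℂ) * Complex.I)) Finset.univ.val
        = Multiset.map μ Finset.univ.val := by
      rw [← hQroots2, hμ]
    obtain ⟨τ, hτ⟩ := exists_comp_perm_eq hcomb
    have hex : ∀ j, ∃ mz : ℤ, (v (τ j) : ℂ) * Complex.I =
        ((μ j).arg : ℂ) * Complex.I + mz * (2 * (π:ℂ) * Complex.I) := by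
      intro j
      have h7 : Complex.exp ((v (τ j) : ℂ) * Complex.I)
          = Complex.exp (((μ j).arg : ℂ) * Complex.I) := by
        rw [hτ j, hexp j]
      exact_mod_cast Complex.exp_eq_exp_iff_exists_int.mp h7
    choose m hm using hex
    have hreal : ∀ j, v (τ j) = (μ j).arg + 2 * (m j : ℝ) * π := by
      intro j
      have h7 := hm j
      have h8 : (((μ j).arg + 2 * (m j : ℝ) * π : ℝ) : ℂ) * Complex.I =
          ((μ j).arg : ℂ) * Complex.I + (m j : ℤ) * (2 * (π:ℂ) * Complex.I) := by
        push_cast; ring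
      rw [← h8] at h7
      have h9 := mul_right_cancel₀ Complex.I_ne_zero h7
      exact_mod_cast h9
    have hτsum : ∑ j, v (τ j) = 0 := by
      rw [Equiv.sum_comp τ v]; exact hsv
    have hmsum : (∑ j, m j) = -ζ := by
      have h10 : ∑ j, ((μ j).arg + 2 * (m j : ℝ) * π) = 0 := by
        rw [← Finset.sum_congr rfl (fun j _ => hreal j)]
        exact hτsum
      have h11 : (∑ j, (m j : ℝ)) = ∑ j, (m j : ℝ) := rfl
      have h12 : 2 * π * (ζ : ℝ) + 2 * (∑ j, (m j : ℝ)) * π = 0 := by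
        rw [← hζ]
        have h13 : ∑ j, 2 * (m j : ℝ) * π = 2 * (∑ j, (m j : ℝ)) * π := by
          rw [Finset.mul_sum, Finset.sum_mul]
        rw [← h13, ← Finset.sum_add_distrib]
        exact h10
      have h14 : (2 * π) * ((ζ : ℝ) + (∑ j, (m j : ℝ))) = 0 := by linear_combination h12
      have h15 : (ζ : ℝ) + (∑ j, (m j : ℝ)) = 0 := by
        rcases mul_eq_zero.mp h14 with h | h
        · exact absurd h (by positivity)
        · exact h
      have h16 : (∑ j, (m j : ℝ)) = ((-ζ : ℤ) : ℝ) := by push_cast; linarith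
      exact_mod_cast h16
    refine ⟨m, hmsum, ?_⟩
    rw [← hXfr, ← hXcd, cd_frobSq W v hWu, ← Equiv.sum_comp τ (fun j => v j ^ 2)]
    exact Finset.sum_congr rfl (fun j _ => by rw [hreal j])
  -- Step 6: existence of the minimizer and conclusion
  obtain ⟨k0, hk0sum, hk0min⟩ := exists_min_tuple n (by omega) (fun j => (μ j).arg) ζ
  have hk0mem : (∑ j, ((μ j).arg + 2 * (k0 j : ℝ) * π) ^ 2) ∈ V := hach k0 hk0sum
  have hmQ : mQ Q = ∑ j, ((μ j).arg + 2 * (k0 j : ℝ) * π) ^ 2 := by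
    have hle : mQ Q ≤ ∑ j, ((μ j).arg + 2 * (k0 j : ℝ) * π) ^ 2 := csInf_le hbddV hk0mem
    have hge : (∑ j, ((μ j).arg + 2 * (k0 j : ℝ) * π) ^ 2) ≤ mQ Q := by
      apply le_csInf ⟨_, hk0mem⟩
      intro r hr
      obtain ⟨k, hk, rfl⟩ := hV_sub r hr
      exact hk0min k hk
    exact le_antisymm hle hge
  constructor
  · exact ⟨k0, hk0sum, hmQ⟩
  · rintro r ⟨k, hk, rfl⟩
    rw [hmQ]
    exact hk0min k hk
end
end

section
/- Let n ≥ 2 and let Q ∈ SU_n have eigenvalues μ_1, …, μ_n counted with multiplicity, ordered so that arg(μ_1) ≤ ⋯ ≤ arg(μ_n), and suppose ζ := ζ(Q) = (1/(2π))·Σ_{j=1}^n arg(μ_j) = 0. Then Θ(Q) equals the set of all X ∈ su_n with exp(X) = Q whose multiset of eigenvalues is { arg(μ_1)·i, arg(μ_2)·i, …, arg(μ_n)·i }. -/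
noncomputable section

open scoped Real Matrix
open Matrix

section Auxiliary

open Polynomial

variable {n : ℕ} {U : Matrix (Fin n) (Fin n) ℂ}

lemma charpoly_diagonal' (d : Fin n → ℂ) :
    (Matrix.diagonal d).charpoly = ∏ i, (X - C (d i)) := by
  unfold Matrix.charpoly Matrix.charmatrix
  rw [RingHom.mapMatrix_apply,
    show (Matrix.diagonal d).map C = Matrix.diagonal (fun i => C (d i)) from
      Matrix.diagonal_map (by simp), Matrix.scalar_apply]
  rw [show ((Matrix.diagonal fun _ : Fin n => (X : ℂ[X])) - Matrix.diagonal fun i => C (d i))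
      = Matrix.diagonal (fun i => X - C (d i)) from (Matrix.diagonal_sub _ _),
    Matrix.det_diagonal]

lemma roots_charpoly_diagonal' (d : Fin n → ℂ) :
    (Matrix.diagonal d).charpoly.roots = Multiset.map d Finset.univ.val := by
  rw [charpoly_diagonal', Polynomial.roots_prod]
  · simp [Polynomial.roots_X_sub_C, Multiset.bind_singleton]
  · apply Finset.prod_ne_zero_iff.mpr
    intro i _
    exact X_sub_C_ne_zero (d i)

lemma charpoly_conj_eq' (U D : Matrix (Fin n) (Fin n) ℂ) (hU : U * star U = 1) :
    (U * D * star U).charpoly = D.charpoly := by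
  unfold Matrix.charpoly
  have hc : ∀ M : Matrix (Fin n) (Fin n) ℂ,
      Commute (Matrix.scalar (Fin n) (X : ℂ[X])) (C.mapMatrix M) :=
    fun M => (Matrix.scalar_commute (X : ℂ[X]) (fun r' => Commute.all _ _) _)
  have key : (U * D * star U).charmatrix =
      (C.mapMatrix U) * D.charmatrix * (C.mapMatrix (star U)) := by
    unfold Matrix.charmatrix
    rw [Matrix.mul_sub, Matrix.sub_mul]
    congr 1
    · rw [← (hc U).eq, mul_assoc, ← _root_.map_mul C.mapMatrix, hU,
        _root_.map_one C.mapMatrix, mul_one]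
    · rw [← _root_.map_mul C.mapMatrix, ← _root_.map_mul C.mapMatrix]
  rw [key, Matrix.det_mul, Matrix.det_mul]
  have h2 : (C.mapMatrix (star U)).det * (C.mapMatrix U).det = 1 := by
    rw [← Matrix.det_mul, ← _root_.map_mul C.mapMatrix, mul_eq_one_comm.mp hU,
      _root_.map_one C.mapMatrix, Matrix.det_one]
  linear_combination D.charmatrix.det * h2

lemma skew_spectral' {X : Matrix (Fin n) (Fin n) ℂ} (hX : Xᴴ = -X) :
    ∃ (U : Matrix (Fin n) (Fin n) ℂ) (θ : Fin n → ℝ),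
      U * star U = 1 ∧ star U * U = 1 ∧
      X = U * Matrix.diagonal (fun j => (θ j : ℂ) * Complex.I) * star U := by
  have hA : (Complex.I • X).IsHermitian := by
    unfold Matrix.IsHermitian
    rw [Matrix.conjTranspose_smul, hX]
    simp
  obtain ⟨hU1, hU2⟩ := Unitary.mem_iff.mp (hA.eigenvectorUnitary).2
  refine ⟨(hA.eigenvectorUnitary : Matrix (Fin n) (Fin n) ℂ), fun j => - hA.eigenvalues j,
    hU2, hU1, ?_⟩
  have hspec := hA.spectral_theorem
  have : X = (-Complex.I) • (Complex.I • X) := by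
    rw [smul_smul]; simp
  conv_lhs => rw [this, hspec, Unitary.conjStarAlgAut_apply]
  rw [← smul_mul_assoc, ← mul_smul_comm, ← Matrix.diagonal_smul]
  congr 2
  rw [Matrix.diagonal_eq_diagonal_iff]
  intro j
  simp
  ring

abbrev dgAux (θ : Fin n → ℝ) : Matrix (Fin n) (Fin n) ℂ :=
  Matrix.diagonal (fun j => (θ j : ℂ) * Complex.I)

lemma trace_conj_diag' (hU1 : star U * U = 1) (θ : Fin n → ℝ) :
    Matrix.trace (U * dgAux θ * star U) = (↑(∑ j, θ j) : ℂ) * Complex.I := by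
  rw [Matrix.trace_mul_cycle, hU1, one_mul, Matrix.trace_diagonal]
  push_cast
  rw [Finset.sum_mul]

lemma exp_conj_diag' (hU2 : U * star U = 1) (θ : Fin n → ℝ) :
    NormedSpace.exp (U * dgAux θ * star U)
      = U * Matrix.diagonal (fun j => Complex.exp ((θ j : ℂ) * Complex.I)) * star U := by
  have hu : IsUnit U := ⟨⟨U, star U, by exact hU2, by exact mul_eq_one_comm.mp hU2⟩, rfl⟩
  have hinv : U⁻¹ = star U := Matrix.inv_eq_right_inv hU2
  rw [← hinv, Matrix.exp_conj U _ hu, Matrix.exp_diagonal]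
  congr 2
  rw [Pi.exp_def]
  funext j
  rw [Complex.exp_eq_exp_ℂ]

lemma frobSq_conj_diag' (hU1 : star U * U = 1) (θ : Fin n → ℝ) :
    (Matrix.trace ((U * dgAux θ * star U) * (U * dgAux θ * star U)ᴴ)).re
      = ∑ j, (θ j) ^ 2 := by
  have h1 : (U * dgAux θ * star U)ᴴ = U * (dgAux θ)ᴴ * star U := by
    rw [Matrix.conjTranspose_mul, Matrix.conjTranspose_mul]
    simp [Matrix.star_eq_conjTranspose, mul_assoc]
  rw [h1]
  have h2 : (U * dgAux θ * star U) * (U * (dgAux θ)ᴴ * star U)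
      = U * (dgAux θ * (dgAux θ)ᴴ) * star U := by
    rw [show (U * dgAux θ * star U) * (U * (dgAux θ)ᴴ * star U)
        = U * dgAux θ * (star U * U) * ((dgAux θ)ᴴ * star U) by noncomm_ring, hU1, mul_one]
    noncomm_ring
  rw [h2, Matrix.trace_mul_cycle, hU1, one_mul]
  rw [show (dgAux θ)ᴴ = Matrix.diagonal (fun j => star ((θ j : ℂ) * Complex.I)) from
    Matrix.diagonal_conjTranspose _, Matrix.diagonal_mul_diagonal, Matrix.trace_diagonal]
  rw [Complex.re_sum]
  congr 1
  funext j
  simp [Complex.ext_iff]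
  ring

lemma mem_su_conj' (hU1 : star U * U = 1) (ψ : Fin n → ℝ) (hs : ∑ j, ψ j = 0) :
    (U * dgAux ψ * star U) ∈ suSet n := by
  constructor
  · have hdg : (dgAux ψ)ᴴ = -(dgAux ψ) := by
      rw [show (dgAux ψ)ᴴ = Matrix.diagonal (fun j => star ((ψ j : ℂ) * Complex.I)) from
        Matrix.diagonal_conjTranspose _]
      have : (fun j => star ((ψ j : ℂ) * Complex.I)) = fun j => -((ψ j : ℂ) * Complex.I) := by
        funext j; simp [Complex.ext_iff]
      rw [this, Matrix.diagonal_neg]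
    rw [Matrix.conjTranspose_mul, Matrix.conjTranspose_mul, hdg,
      show (star U)ᴴ = U by rw [Matrix.star_eq_conjTranspose, Matrix.conjTranspose_conjTranspose],
      show Uᴴ = star U from rfl]
    noncomm_ring
  · rw [trace_conj_diag' hU1, hs]
    simp

lemma sum_map_eq' {α β : Type*} [AddCommMonoid β] {f g : Fin n → α}
    (h : Multiset.map f Finset.univ.val = Multiset.map g Finset.univ.val) (φ : α → β) :
    ∑ j, φ (f j) = ∑ j, φ (g j) := by
  have h2 := congrArg (fun s => (Multiset.map φ s).sum) h
  simpa [Multiset.map_map, Finset.sum, Function.comp_def] using h2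

lemma exp_arg_of_exp' (θ : ℝ) :
    Complex.exp ((((Complex.exp ((θ : ℂ) * Complex.I)).arg : ℝ) : ℂ) * Complex.I)
      = Complex.exp ((θ : ℂ) * Complex.I) := by
  have habs : ‖Complex.exp ((θ : ℂ) * Complex.I)‖ = 1 :=
    Complex.norm_exp_ofReal_mul_I θ
  have h2 := Complex.norm_mul_exp_arg_mul_I (Complex.exp ((θ : ℂ) * Complex.I))
  rwa [habs, Complex.ofReal_one, one_mul] at h2

lemma arg_decomp' (θ : ℝ) :
    ∃ k : ℤ, θ = (Complex.exp ((θ : ℂ) * Complex.I)).arg + (k : ℝ) * (2 * π)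
      ∧ -π < (Complex.exp ((θ : ℂ) * Complex.I)).arg
      ∧ (Complex.exp ((θ : ℂ) * Complex.I)).arg ≤ π := by
  rw [Complex.arg_exp_mul_I]
  refine ⟨toIocDiv (mul_pos two_pos Real.pi_pos) (-π) θ, ?_, ?_, ?_⟩
  · have h' := toIocMod_add_toIocDiv_zsmul (mul_pos two_pos Real.pi_pos) (-π) θ
    rw [zsmul_eq_mul] at h'
    linarith
  · exact (toIocMod_mem_Ioc (mul_pos two_pos Real.pi_pos) (-π) θ).1
  · have := (toIocMod_mem_Ioc (mul_pos two_pos Real.pi_pos) (-π) θ).2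
    linarith

lemma sq_arg_le' (θ : ℝ) : (Complex.exp ((θ : ℂ) * Complex.I)).arg ^ 2 ≤ θ ^ 2 := by
  obtain ⟨k, hθ, h1, h2⟩ := arg_decomp' θ
  set a := (Complex.exp ((θ : ℂ) * Complex.I)).arg with ha
  have expand : (a + (k : ℝ) * (2 * π)) ^ 2 - a ^ 2
      = 4 * (π * ((k : ℝ) * (a + π * (k : ℝ)))) := by ring
  have key : 0 ≤ (k : ℝ) * (a + π * (k : ℝ)) := by
    rcases lt_trichotomy k 0 with hk | hk | hk
    · have hk' : (k : ℝ) ≤ -1 := by exact_mod_cast (show k ≤ -1 by omega)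
      have h3 : a + π * (k : ℝ) ≤ 0 := by nlinarith [Real.pi_pos]
      nlinarith
    · simp [hk]
    · have hk' : (1 : ℝ) ≤ (k : ℝ) := by exact_mod_cast hk
      have h3 : 0 ≤ a + π * (k : ℝ) := by nlinarith [Real.pi_pos]
      nlinarith
  have h4 : 0 ≤ 4 * (π * ((k : ℝ) * (a + π * (k : ℝ)))) := by
    have := mul_nonneg Real.pi_pos.le key
    linarith
  rw [hθ]
  linarith

lemma sq_arg_eq_cases' (θ : ℝ) (h : (Complex.exp ((θ : ℂ) * Complex.I)).arg ^ 2 = θ ^ 2) :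
    θ = (Complex.exp ((θ : ℂ) * Complex.I)).arg ∨
      ((Complex.exp ((θ : ℂ) * Complex.I)).arg = π ∧ θ = -π) := by
  obtain ⟨k, hθ, h1, h2⟩ := arg_decomp' θ
  set a := (Complex.exp ((θ : ℂ) * Complex.I)).arg with ha
  rcases eq_or_ne k 0 with hk | hk
  · left; rw [hθ, hk]; simp
  · have hkr : (k : ℝ) ≠ 0 := Int.cast_ne_zero.mpr hk
    have hθ2 : θ ^ 2 = (a + (k : ℝ) * (2 * π)) ^ 2 := by rw [hθ]
    have expand : (a + (k : ℝ) * (2 * π)) ^ 2 - a ^ 2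
        = (k : ℝ) * (2 * π) * (2 * a + (k : ℝ) * (2 * π)) := by ring
    have hfac : (k : ℝ) * (2 * π) * (2 * a + (k : ℝ) * (2 * π)) = 0 := by linarith
    have hzero : a + π * (k : ℝ) = 0 := by
      rcases mul_eq_zero.mp hfac with h' | h'
      · exact absurd h' (mul_ne_zero hkr (by positivity))
      · linarith
    have hk1 : (-1 : ℝ) ≤ (k : ℝ) := by nlinarith [Real.pi_pos]
    have hk2 : (k : ℝ) < 1 := by nlinarith [Real.pi_pos]
    have hkm : k = -1 := by
      have h1' : (-1 : ℤ) ≤ k := by exact_mod_cast hk1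
      have h2' : k < 1 := by exact_mod_cast hk2
      omega
    subst hkm
    push_cast at hθ hzero
    right
    constructor <;> linarith

end Auxiliary

/-- if `ζ(Q) = 0`, then `Θ(Q)` is the set of `su_n`-logarithms of `Q`
whose multiset of eigenvalues is `{arg(μ_1)·i, …, arg(μ_n)·i}`. -/
theorem stmt_10 (n : ℕ) (hn : 2 ≤ n) (Q : Matrix (Fin n) (Fin n) ℂ)
    (hQ : Q ∈ SpecialUnitary n) (μ : Fin n → ℂ)
    (hμ : Q.charpoly.roots = Multiset.map μ Finset.univ.val)
    (hmono : Monotone fun j => (μ j).arg)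
    (hζ : (∑ j, (μ j).arg) = 0) :
    ThetaQ Q = {X | X ∈ suSet n ∧ NormedSpace.exp X = Q ∧
      X.charpoly.roots =
        Multiset.map (fun j => (((μ j).arg : ℝ) : ℂ) * Complex.I) Finset.univ.val} := by
  classical
  set S : Set ℝ := {r : ℝ | ∃ X ∈ suSet n, NormedSpace.exp X = Q ∧ frobSq X = r} with hS
  have hmQ : mQ Q = sInf S := by rw [hS]; rfl
  set V : ℝ := ∑ j, ((μ j).arg) ^ 2 with hV
  have main : ∀ Y ∈ suSet n, NormedSpace.exp Y = Q →
      ∃ (U : Matrix (Fin n) (Fin n) ℂ) (θ : Fin n → ℝ),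
        U * star U = 1 ∧ star U * U = 1 ∧ Y = U * dgAux θ * star U ∧ (∑ j, θ j) = 0 ∧
        frobSq Y = ∑ j, θ j ^ 2 ∧
        Multiset.map (fun j => Complex.exp ((θ j : ℂ) * Complex.I)) Finset.univ.val
          = Multiset.map μ Finset.univ.val := by
    intro Y hYsu hYexp
    obtain ⟨U, θ, hU2, hU1, hYeq⟩ := skew_spectral' hYsu.1
    refine ⟨U, θ, hU2, hU1, hYeq, ?_, ?_, ?_⟩
    · have htr := hYsu.2
      rw [hYeq, trace_conj_diag' hU1] at htr
      have h0 : ((∑ j, θ j : ℝ) : ℂ) = 0 := by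
        rcases mul_eq_zero.mp htr with h | h
        · exact h
        · exact absurd h Complex.I_ne_zero
      exact_mod_cast h0
    · simp only [frobSq]
      rw [hYeq]
      exact frobSq_conj_diag' hU1 θ
    · rw [← hμ, ← hYexp, hYeq, exp_conj_diag' hU2,
        charpoly_conj_eq' _ _ hU2, roots_charpoly_diagonal']
  have hlb : ∀ r ∈ S, V ≤ r := by
    rintro r ⟨Y, hYsu, hYexp, rfl⟩
    obtain ⟨U, θ, hU2, hU1, hYeq, hsum, hfrob, hms⟩ := main Y hYsu hYexp
    rw [hfrob]
    have e1 : V = ∑ j, (Complex.exp ((θ j : ℂ) * Complex.I)).arg ^ 2 := by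
      rw [hV]
      exact (sum_map_eq' hms (fun z => z.arg ^ 2)).symm
    rw [e1]
    exact Finset.sum_le_sum fun j _ => sq_arg_le' (θ j)
  have hbdd : BddBelow S := ⟨V, fun r hr => hlb r hr⟩
  have hval : ∀ X : Matrix (Fin n) (Fin n) ℂ, X ∈ suSet n → NormedSpace.exp X = Q →
      X.charpoly.roots
        = Multiset.map (fun j => (((μ j).arg : ℝ) : ℂ) * Complex.I) Finset.univ.val →
      frobSq X = V := by
    intro X hXsu hXexp hXr
    obtain ⟨U, θ, hU2, hU1, hXeq, hsum, hfrob, hms⟩ := main X hXsu hXexp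
    rw [hfrob]
    have hr2 : Multiset.map (fun j => (θ j : ℂ) * Complex.I) Finset.univ.val
        = Multiset.map (fun j => (((μ j).arg : ℝ) : ℂ) * Complex.I) Finset.univ.val := by
      rw [← hXr, hXeq, charpoly_conj_eq' _ _ hU2, roots_charpoly_diagonal']
    have h3 := sum_map_eq' hr2 (fun z => z.im ^ 2)
    rw [hV]
    simpa [Complex.mul_I_im] using h3
  ext X
  simp only [ThetaQ, Set.mem_setOf_eq]
  constructor
  · rintro ⟨hXsu, hXexp, hXmin⟩
    refine ⟨hXsu, hXexp, ?_⟩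
    obtain ⟨U, θ, hU2, hU1, hXeq, hsum, hfrob, hms⟩ := main X hXsu hXexp
    set a : Fin n → ℝ := fun j => (Complex.exp ((θ j : ℂ) * Complex.I)).arg with haDef
    have hsa : ∑ j, a j = 0 := by
      have h1 := sum_map_eq' hms Complex.arg
      rw [hζ] at h1
      exact h1
    have hX'su := mem_su_conj' hU1 a hsa
    have hX'exp : NormedSpace.exp (U * dgAux a * star U) = Q := by
      rw [exp_conj_diag' hU2]
      have he : (fun j => Complex.exp ((a j : ℂ) * Complex.I))
          = fun j => Complex.exp ((θ j : ℂ) * Complex.I) :=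
        funext fun j => exp_arg_of_exp' (θ j)
      rw [he, ← exp_conj_diag' hU2, ← hXeq, hXexp]
    have hX'frob : frobSq (U * dgAux a * star U) = ∑ j, a j ^ 2 := by
      simp only [frobSq]
      exact frobSq_conj_diag' hU1 a
    have hmem' : (∑ j, a j ^ 2) ∈ S := ⟨_, hX'su, hX'exp, hX'frob⟩
    have hle : mQ Q ≤ ∑ j, a j ^ 2 := by
      rw [hmQ]
      exact csInf_le hbdd hmem'
    have hle2 : ∑ j, θ j ^ 2 ≤ ∑ j, a j ^ 2 := by
      rw [← hfrob, hXmin]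
      exact hle
    have hge : ∀ j ∈ Finset.univ, a j ^ 2 ≤ θ j ^ 2 := fun j _ => sq_arg_le' (θ j)
    have hsums : ∑ j, a j ^ 2 = ∑ j, θ j ^ 2 :=
      le_antisymm (Finset.sum_le_sum hge) hle2
    have hpt : ∀ j ∈ Finset.univ, a j ^ 2 = θ j ^ 2 :=
      (Finset.sum_eq_sum_iff_of_le hge).mp hsums
    have hcases : ∀ j, θ j = a j ∨ (a j = π ∧ θ j = -π) := fun j =>
      sq_arg_eq_cases' (θ j) (hpt j (Finset.mem_univ j))
    have hd0 : ∀ j ∈ Finset.univ, (0 : ℝ) ≤ a j - θ j := by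
      intro j _
      rcases hcases j with h | h
      · rw [h]; simp
      · rw [h.1, h.2]
        have := Real.pi_pos
        linarith
    have hdsum : ∑ j, (a j - θ j) = 0 := by
      rw [Finset.sum_sub_distrib, hsa, hsum]
      ring
    have hθa : ∀ j, θ j = a j := by
      intro j
      have := (Finset.sum_eq_zero_iff_of_nonneg hd0).mp hdsum j (Finset.mem_univ j)
      linarith
    rw [hXeq, charpoly_conj_eq' _ _ hU2, roots_charpoly_diagonal']
    have hfun : (fun j => (θ j : ℂ) * Complex.I) = fun j => ((a j : ℝ) : ℂ) * Complex.I := by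
      funext j; rw [hθa j]
    rw [hfun, haDef]
    have hmaps := congrArg (Multiset.map (fun z : ℂ => ((z.arg : ℝ) : ℂ) * Complex.I)) hms
    simpa [Multiset.map_map, Function.comp_def] using hmaps
  · rintro ⟨hXsu, hXexp, hXr⟩
    refine ⟨hXsu, hXexp, ?_⟩
    have hfv := hval X hXsu hXexp hXr
    have hmem' : V ∈ S := ⟨X, hXsu, hXexp, hfv⟩
    have hEq : mQ Q = V := by
      rw [hmQ]
      exact le_antisymm (csInf_le hbdd hmem') (le_csInf ⟨V, hmem'⟩ hlb)
    rw [hfv, hEq]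
end
end
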